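/- Let F be a linearly ordered field with integer part I, let α, β ∈ F be distinct irrationals with α, β > 1, and let a, b ∈ I^{≥0} be such that a·(1 − α^{−1}) + b·(1 − β^{−1}) = 1. Then N_α ∪ N_β = I^{≥0}. -/

import Mathlib

/-- `N_α`: the set `{⌊n·α⌋ : n ∈ I, n ≥ 0}`, where `fl` is the floor function
associated to the integer part `I` of `F`. -/
def Nset {F : Type*} [Field F] [LinearOrder F] [IsStrictOrderedRing F] (I : Subring F) (fl : F → F) (α : F) : Set F :=
  {y | ∃ n, n ∈ I ∧ 0 ≤ n ∧ y = fl (n * α)}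

/-- `I^{≥0}`: the nonnegative elements of `I`. -/
def Inonneg {F : Type*} [Field F] [LinearOrder F] [IsStrictOrderedRing F] (I : Subring F) : Set F :=
  {n | n ∈ I ∧ 0 ≤ n}

/-- An element of `F` is rational (with respect to `I`) if it lies in the
fraction field of `I` viewed inside `F`. -/
def IsRat {F : Type*} [Field F] [LinearOrder F] [IsStrictOrderedRing F] (I : Subring F) (α : F) : Prop :=
  ∃ p ∈ I, ∃ q ∈ I, q ≠ 0 ∧ α = p / q

section Aux

variable {F : Type*} [Field F] [LinearOrder F] [IsStrictOrderedRing F] {I : Subring F}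

lemma aux_gap (hdisc : ∀ x ∈ I, ¬(0 < x ∧ x < 1)) {x y : F}
    (hx : x ∈ I) (hy : y ∈ I) (hxy : x < y) : x + 1 ≤ y := by
  by_contra h
  push_neg at h
  exact hdisc (y - x) (sub_mem hy hx) ⟨by linarith, by linarith⟩

lemma aux_nonneg (hdisc : ∀ x ∈ I, ¬(0 < x ∧ x < 1)) {x : F}
    (hx : x ∈ I) (h : -1 < x) : 0 ≤ x := by
  by_contra h'
  push_neg at h'
  exact hdisc (-x) (neg_mem hx) ⟨by linarith, by linarith⟩

/-- If `m ≥ 1` is not in `N_γ`, there is `k ≥ 0` with `kγ < m` and `m+1 < (k+1)γ`. -/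
lemma aux_key (fl : F → F)
    (hdisc : ∀ x ∈ I, ¬(0 < x ∧ x < 1))
    (hfl : ∀ x : F, fl x ∈ I ∧ fl x ≤ x ∧ x < fl x + 1)
    {γ : F} (hγ1 : 1 < γ) (hirr : ¬ IsRat I γ)
    {m : F} (hmI : m ∈ I) (hm1 : 1 ≤ m) (hm : m ∉ Nset I fl γ) :
    ∃ k, k ∈ I ∧ 0 ≤ k ∧ k * γ < m ∧ m + 1 < (k + 1) * γ := by
  have hγ0 : (0 : F) < γ := by linarith
  set t : F := (m + 1) / γ with ht
  obtain ⟨hkI, hk1, hk2⟩ := hfl t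
  set k : F := fl t with hk
  have ht0 : 0 < t := div_pos (by linarith) hγ0
  have hk0 : 0 ≤ k := aux_nonneg hdisc hkI (by linarith)
  have htγ : t * γ = m + 1 := div_mul_cancel₀ _ (ne_of_gt hγ0)
  -- k < t, using irrationality
  have hklt : k < t := by
    rcases lt_or_eq_of_le hk1 with h | h
    · exact h
    · exfalso
      have hkne : k ≠ 0 := by
        intro h0
        rw [h0] at h
        rw [← h] at ht0
        exact lt_irrefl 0 ht0
      exact hirr ⟨m + 1, add_mem hmI I.one_mem, k, hkI, hkne, by
        rw [eq_div_iff hkne, ← htγ, h]; ring⟩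
  have hkγ : k * γ < m + 1 := by
    calc k * γ < t * γ := by exact mul_lt_mul_of_pos_right hklt hγ0
    _ = m + 1 := htγ
  -- fl (k * γ) ≠ m
  have hfne : fl (k * γ) ≠ m := by
    intro h
    exact hm ⟨k, hkI, hk0, h.symm⟩
  obtain ⟨hfI, hf1, hf2⟩ := hfl (k * γ)
  have hflem : fl (k * γ) < m + 1 := lt_of_le_of_lt hf1 hkγ
  have hflem' : fl (k * γ) ≤ m := by
    by_contra h
    push_neg at h
    have := aux_gap hdisc hmI hfI h
    linarith
  have hfltm : fl (k * γ) + 1 ≤ m :=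
    aux_gap hdisc hfI hmI (lt_of_le_of_ne hflem' hfne)
  refine ⟨k, hkI, hk0, by linarith, ?_⟩
  calc m + 1 = t * γ := htγ.symm
  _ < (k + 1) * γ := mul_lt_mul_of_pos_right hk2 hγ0

end Aux

theorem stmt_9 {F : Type*} [Field F] [LinearOrder F] [IsStrictOrderedRing F] (I : Subring F) (fl : F → F)
    (hdisc : ∀ x ∈ I, ¬(0 < x ∧ x < 1))
    (hfl : ∀ x : F, fl x ∈ I ∧ fl x ≤ x ∧ x < fl x + 1)
    (α β : F) (hα1 : 1 < α) (hβ1 : 1 < β)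
    (hαirr : ¬ IsRat I α) (hβirr : ¬ IsRat I β) (hne : α ≠ β)
    (a b : F) (ha : a ∈ I) (hb : b ∈ I) (ha0 : 0 ≤ a) (hb0 : 0 ≤ b)
    (hab : a * (1 - α⁻¹) + b * (1 - β⁻¹) = 1) :
    Nset I fl α ∪ Nset I fl β = Inonneg I := by
  have hα0 : (0 : F) < α := by linarith
  have hβ0 : (0 : F) < β := by linarith
  -- `a` and `b` are positive (otherwise α or β would be rational)
  have key0 : ∀ c γ : F, c ∈ I → 1 < γ → ¬ IsRat I γ → c * (1 - γ⁻¹) = 1 → False := by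
    intro c γ hc hγ1 hirr h
    have hγ0 : (0 : F) < γ := by linarith
    have hγne : γ ≠ 0 := ne_of_gt hγ0
    have h' : c * γ - c = γ := by
      have hu : γ * γ⁻¹ = 1 := mul_inv_cancel₀ hγne
      linear_combination γ * h + c * hu
    have hc1 : c - 1 ≠ 0 := by
      intro h0
      have hc1' : c = 1 := by linarith [sub_eq_zero.mp h0]
      rw [hc1', one_mul] at h'
      linarith
    apply hirr
    refine ⟨c, hc, c - 1, sub_mem hc I.one_mem, hc1, ?_⟩
    rw [eq_div_iff hc1]
    linear_combination h'
  have hapos : 0 < a := by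
    rcases lt_or_eq_of_le ha0 with h | h
    · exact h
    · exfalso
      apply key0 b β hb hβ1 hβirr
      rw [← h] at hab
      linarith
  have hbpos : 0 < b := by
    rcases lt_or_eq_of_le hb0 with h | h
    · exact h
    · exfalso
      apply key0 a α ha hα1 hαirr
      rw [← h] at hab
      linarith
  have fwd : ∀ γ : F, 0 < γ → ∀ n, n ∈ I → 0 ≤ n → fl (n * γ) ∈ Inonneg I := by
    intro γ hγ n hnI hn0
    obtain ⟨hfI, hf1, hf2⟩ := hfl (n * γ)
    refine ⟨hfI, aux_nonneg hdisc hfI ?_⟩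
    have : 0 ≤ n * γ := mul_nonneg hn0 (le_of_lt hγ)
    linarith
  apply Set.eq_of_subset_of_subset
  · rintro y (⟨n, hnI, hn0, rfl⟩ | ⟨n, hnI, hn0, rfl⟩)
    · exact fwd α hα0 n hnI hn0
    · exact fwd β hβ0 n hnI hn0
  · rintro m ⟨hmI, hm0⟩
    by_contra hm
    rw [Set.mem_union] at hm
    push_neg at hm
    obtain ⟨hmα, hmβ⟩ := hm
    -- fl 0 = 0, so m ≠ 0
    have hfl0 : fl 0 = 0 := by
      obtain ⟨h1, h2, h3⟩ := hfl 0
      have := aux_nonneg hdisc h1 (by linarith)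
      linarith
    have hmne : m ≠ 0 := by
      intro h
      exact hmα ⟨0, I.zero_mem, le_refl 0, by rw [zero_mul, hfl0, h]⟩
    have hm1 : 1 ≤ m := by
      have : (0:F) < m := lt_of_le_of_ne hm0 (Ne.symm hmne)
      have := aux_gap hdisc I.zero_mem hmI this
      linarith
    obtain ⟨k, hkI, hk0, hk1, hk2⟩ := aux_key fl hdisc hfl hα1 hαirr hmI hm1 hmα
    obtain ⟨l, hlI, hl0, hl1, hl2⟩ := aux_key fl hdisc hfl hβ1 hβirr hmI hm1 hmβ
    -- translate to inequalities about m * α⁻¹ and m * β⁻¹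
    have hαi : 0 < α⁻¹ := inv_pos.mpr hα0
    have hβi : 0 < β⁻¹ := inv_pos.mpr hβ0
    have hk1' : k < m * α⁻¹ := by
      have h := mul_lt_mul_of_pos_right hk1 hαi
      rwa [mul_assoc, mul_inv_cancel₀ (ne_of_gt hα0), mul_one] at h
    have hk2' : m * α⁻¹ < k + 1 - α⁻¹ := by
      have h := mul_lt_mul_of_pos_right hk2 hαi
      rw [mul_assoc, mul_inv_cancel₀ (ne_of_gt hα0), mul_one, add_mul, one_mul] at h
      linarith
    have hl1' : l < m * β⁻¹ := by
      have h := mul_lt_mul_of_pos_right hl1 hβi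
      rwa [mul_assoc, mul_inv_cancel₀ (ne_of_gt hβ0), mul_one] at h
    have hl2' : m * β⁻¹ < l + 1 - β⁻¹ := by
      have h := mul_lt_mul_of_pos_right hl2 hβi
      rw [mul_assoc, mul_inv_cancel₀ (ne_of_gt hβ0), mul_one, add_mul, one_mul] at h
      linarith
    -- multiply by a, b and sum
    have hka : a * k < a * (m * α⁻¹) := mul_lt_mul_of_pos_left hk1' hapos
    have hka' : a * (m * α⁻¹) < a * (k + 1) - a * α⁻¹ := by
      have := mul_lt_mul_of_pos_left hk2' hapos
      rw [mul_sub] at this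
      exact this
    have hlb : b * l < b * (m * β⁻¹) := mul_lt_mul_of_pos_left hl1' hbpos
    have hlb' : b * (m * β⁻¹) < b * (l + 1) - b * β⁻¹ := by
      have := mul_lt_mul_of_pos_left hl2' hbpos
      rw [mul_sub] at this
      exact this
    have hS : a * (m * α⁻¹) + b * (m * β⁻¹) = m * a + m * b - m := by
      linear_combination (-m) * hab
    set x : F := m * a + m * b - m - (a * k + b * l) with hx
    have hxI : x ∈ I :=
      sub_mem (sub_mem (add_mem (mul_mem hmI ha) (mul_mem hmI hb)) hmI)
        (add_mem (mul_mem ha hkI) (mul_mem hb hlI))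
    refine hdisc x hxI ⟨by rw [hx]; linarith, by rw [hx]; linarith⟩
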